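/- arXiv:2308.03115 — 2 statements merged into one kernel-verified Lean document; each statement's English description precedes it below -/
import Mathlib

section
/- Let G_N be the graph with vertex set {v_1,...,v_N, u_1,...,u_N}, where the v_i form a complete graph and each u_i is joined to v_i by a single edge. Fix positive weights μ_1,...,μ_N on the interior vertices v_i. Then for any sequence of real numbers 0 < λ_1 < λ_2 ≤ ... ≤ λ_N, there exist positive edge weights θ_{ij} (for i<j) and θ_i such that the combinatorial Dirichlet Laplacian Δ_Θ, defined on functions vanishing at the boundary vertices u_i by (Δ_Θ f)(v_i) = (1/μ_i) Σ_{j≠i} θ_{ij}(f(v_i)-f(v_j)) + (θ_i/μ_i) f(v_i), has eigenvalues exactly λ_1,...,λ_N (with multiplicity). -/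
open Finset

namespace Stmt0

variable {N : ℕ}

noncomputable def T (μ : Fin N → ℝ) (n : ℕ) : ℝ :=
  ∑ i : Fin N, if (i : ℕ) < n then μ i else 0

noncomputable def w (μ : Fin N → ℝ) (i : Fin N) : ℝ := Real.sqrt (μ i)

lemma w_pos {μ : Fin N → ℝ} (hμ : ∀ i, 0 < μ i) (i : Fin N) : 0 < w μ i :=
  Real.sqrt_pos.2 (hμ i)

lemma w_sq {μ : Fin N → ℝ} (hμ : ∀ i, 0 < μ i) (i : Fin N) : w μ i * w μ i = μ i :=
  Real.mul_self_sqrt (hμ i).le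

lemma T_succ (μ : Fin N → ℝ) (k : Fin N) : T μ ((k : ℕ) + 1) = T μ (k : ℕ) + μ k := by
  unfold T
  have h : ∀ i : Fin N, (if (i : ℕ) < (k : ℕ) + 1 then μ i else 0)
      = (if (i : ℕ) < (k : ℕ) then μ i else 0) + (if i = k then μ i else 0) := by
    intro i
    rcases lt_trichotomy (i : ℕ) (k : ℕ) with h | h | h
    · have hne : i ≠ k := fun e => by simp [e] at h
      simp [h, hne, Nat.lt_succ_of_lt h]
    · have he : i = k := Fin.ext h
      subst he
      simp
    · have h1 : ¬ (i : ℕ) < (k : ℕ) + 1 := by omega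
      have h2 : ¬ (i : ℕ) < (k : ℕ) := by omega
      have hne : i ≠ k := fun e => by simp [e] at h
      simp [h1, h2, hne]
  rw [Finset.sum_congr rfl (fun i _ => h i), Finset.sum_add_distrib]
  simp [Finset.sum_ite_eq']

lemma T_nonneg {μ : Fin N → ℝ} (hμ : ∀ i, 0 < μ i) (n : ℕ) : 0 ≤ T μ n :=
  Finset.sum_nonneg fun i _ => by by_cases h : (i : ℕ) < n <;> simp [h, (hμ i).le]

lemma T_mono {μ : Fin N → ℝ} (hμ : ∀ i, 0 < μ i) {n m : ℕ} (h : n ≤ m) :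
    T μ n ≤ T μ m := by
  apply Finset.sum_le_sum
  intro i _
  by_cases h1 : (i : ℕ) < n
  · simp [h1, lt_of_lt_of_le h1 h]
  · by_cases h2 : (i : ℕ) < m <;> simp [h1, h2, (hμ i).le]

lemma T_pos {μ : Fin N → ℝ} (hN : 0 < N) (hμ : ∀ i, 0 < μ i) {n : ℕ} (hn : 0 < n) :
    0 < T μ n := by
  have h := Finset.single_le_sum (f := fun i : Fin N => if (i : ℕ) < n then μ i else 0)
    (fun i _ => by by_cases h : (i : ℕ) < n <;> simp [h, (hμ i).le]) (Finset.mem_univ ⟨0, hN⟩)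
  simp only [show ((⟨0, hN⟩ : Fin N) : ℕ) = 0 from rfl, hn, if_pos] at h
  exact lt_of_lt_of_le (hμ ⟨0, hN⟩) h

lemma sum_piece (μ : Fin N → ℝ) (k : Fin N) (c : ℝ) :
    (∑ i : Fin N, if (i : ℕ) < (k : ℕ) then μ i else if i = k then c else 0)
      = T μ (k : ℕ) + c := by
  have h : ∀ i : Fin N, (if (i : ℕ) < (k : ℕ) then μ i else if i = k then c else 0)
      = (if (i : ℕ) < (k : ℕ) then μ i else 0) + (if i = k then c else 0) := by
    intro i
    rcases lt_trichotomy (i : ℕ) (k : ℕ) with h | h | h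
    · have hne : i ≠ k := fun e => by simp [e] at h
      simp [h, hne]
    · have he : i = k := Fin.ext h
      have h2 : ¬ (i : ℕ) < (k : ℕ) := by omega
      simp [he, h2]
    · have h2 : ¬ (i : ℕ) < (k : ℕ) := by omega
      have hne : i ≠ k := fun e => by simp [e] at h
      simp [h2, hne]
  rw [Finset.sum_congr rfl (fun i _ => h i), Finset.sum_add_distrib]
  simp [T, Finset.sum_ite_eq']

lemma T_top (μ : Fin N → ℝ) : T μ N = ∑ i : Fin N, μ i := by
  unfold T
  exact Finset.sum_congr rfl fun i _ => by simp [i.isLt]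

noncomputable def u (μ : Fin N → ℝ) (k i : Fin N) : ℝ :=
  if (k : ℕ) = 0 then w μ i
  else if (i : ℕ) < (k : ℕ) then w μ i
  else if i = k then -(T μ (k : ℕ)) / w μ k
  else 0

noncomputable def nsq (μ : Fin N → ℝ) (k : Fin N) : ℝ :=
  if (k : ℕ) = 0 then T μ N else T μ (k : ℕ) * T μ ((k : ℕ) + 1) / μ k

lemma nsq_pos {μ : Fin N → ℝ} (hN : 0 < N) (hμ : ∀ i, 0 < μ i) (k : Fin N) :
    0 < nsq μ k := by
  unfold nsq
  by_cases h : (k : ℕ) = 0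
  · simp only [h, if_pos rfl]
    exact T_pos hN hμ hN
  · rw [if_neg h]
    have h1 : 0 < T μ (k : ℕ) := T_pos hN hμ (Nat.pos_of_ne_zero h)
    have h2 : 0 < T μ ((k : ℕ) + 1) := T_pos hN hμ (Nat.succ_pos _)
    exact div_pos (mul_pos h1 h2) (hμ k)

lemma uinner_lt {μ : Fin N → ℝ} (hN : 0 < N) (hμ : ∀ i, 0 < μ i) {k l : Fin N}
    (hkl : (k : ℕ) < (l : ℕ)) : (∑ i, u μ k i * u μ l i) = 0 := by
  have hl0 : (l : ℕ) ≠ 0 := by omega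
  have hwk := w_pos hμ k
  have hwl := w_pos hμ l
  by_cases hk0 : (k : ℕ) = 0
  · have h : ∀ i : Fin N, u μ k i * u μ l i
        = (if (i : ℕ) < (l : ℕ) then μ i else if i = l then -(T μ (l : ℕ)) else 0) := by
      intro i
      rcases lt_trichotomy (i : ℕ) (l : ℕ) with h | h | h
      · have hne : i ≠ l := fun e => by simp [e] at h
        simp [u, hk0, hl0, h, hne, w_sq hμ]
      · have he : i = l := Fin.ext h
        subst he
        have h2 : ¬ (i : ℕ) < (i : ℕ) := by omega
        have hu1 : u μ k i = w μ i := by simp [u, hk0]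
        have hu2 : u μ i i = -(T μ (i : ℕ)) / w μ i := by simp [u, hl0, h2]
        rw [hu1, hu2, if_neg h2, if_pos rfl]
        field_simp
      · have h2 : ¬ (i : ℕ) < (l : ℕ) := by omega
        have hne : i ≠ l := fun e => by simp [e] at h
        simp [u, hk0, hl0, h2, hne]
    rw [Finset.sum_congr rfl (fun i _ => h i), sum_piece]
    ring
  · have h : ∀ i : Fin N, u μ k i * u μ l i
        = (if (i : ℕ) < (k : ℕ) then μ i else if i = k then -(T μ (k : ℕ)) else 0) := by
      intro i
      rcases lt_trichotomy (i : ℕ) (k : ℕ) with h | h | h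
      · have hne : i ≠ k := fun e => by simp [e] at h
        have hil : (i : ℕ) < (l : ℕ) := by omega
        have hnel : i ≠ l := fun e => by simp [e] at hil
        simp [u, hk0, hl0, h, hne, hil, w_sq hμ]
      · have he : i = k := Fin.ext h
        subst he
        have h2 : ¬ (i : ℕ) < (i : ℕ) := by omega
        have hu1 : u μ i i = -(T μ (i : ℕ)) / w μ i := by simp [u, hk0, h2]
        have hu2 : u μ l i = w μ i := by simp [u, hl0, hkl]
        rw [hu1, hu2, if_neg h2, if_pos rfl]
        field_simp
      · have h2 : ¬ (i : ℕ) < (k : ℕ) := by omega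
        have hne : i ≠ k := fun e => by simp [e] at h
        simp [u, hk0, h2, hne]
    rw [Finset.sum_congr rfl (fun i _ => h i), sum_piece]
    ring

lemma uinner_self {μ : Fin N → ℝ} (hN : 0 < N) (hμ : ∀ i, 0 < μ i) (k : Fin N) :
    (∑ i, u μ k i * u μ k i) = nsq μ k := by
  by_cases hk0 : (k : ℕ) = 0
  · have h : ∀ i : Fin N, u μ k i * u μ k i = μ i := fun i => by
      simp [u, hk0, w_sq hμ]
    rw [Finset.sum_congr rfl (fun i _ => h i)]
    simp [nsq, hk0, T_top]
  · have hwk := (w_pos hμ k).ne'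
    have h : ∀ i : Fin N, u μ k i * u μ k i
        = (if (i : ℕ) < (k : ℕ) then μ i
           else if i = k then T μ (k : ℕ) * T μ (k : ℕ) / μ k else 0) := by
      intro i
      rcases lt_trichotomy (i : ℕ) (k : ℕ) with h | h | h
      · have hne : i ≠ k := fun e => by simp [e] at h
        simp [u, hk0, h, hne, w_sq hμ]
      · have he : i = k := Fin.ext h
        subst he
        have h2 : ¬ (i : ℕ) < (i : ℕ) := by omega
        have hu : u μ i i = -(T μ (i : ℕ)) / w μ i := by simp [u, hk0, h2]
        rw [hu, if_neg h2, if_pos rfl, div_mul_div_comm, ← w_sq hμ i]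
        ring
      · have h2 : ¬ (i : ℕ) < (k : ℕ) := by omega
        have hne : i ≠ k := fun e => by simp [e] at h
        simp [u, hk0, h2, hne]
    rw [Finset.sum_congr rfl (fun i _ => h i), sum_piece]
    have hk : 0 < T μ (k : ℕ) := T_pos hN hμ (Nat.pos_of_ne_zero hk0)
    have hμk := (hμ k).ne'
    simp only [nsq, if_neg hk0, T_succ]
    field_simp
    ring

lemma uinner {μ : Fin N → ℝ} (hN : 0 < N) (hμ : ∀ i, 0 < μ i) (k l : Fin N) :
    (∑ i, u μ k i * u μ l i) = if k = l then nsq μ k else 0 := by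
  rcases lt_trichotomy (k : ℕ) (l : ℕ) with h | h | h
  · have hne : k ≠ l := fun e => by simp [e] at h
    rw [if_neg hne, uinner_lt hN hμ h]
  · have he : k = l := Fin.ext h
    subst he
    rw [if_pos rfl, uinner_self hN hμ]
  · have hne : k ≠ l := fun e => by simp [e] at h
    rw [if_neg hne, Finset.sum_congr rfl (fun i _ => mul_comm (u μ k i) (u μ l i)),
      uinner_lt hN hμ h]

noncomputable def ph (μ : Fin N → ℝ) (k i : Fin N) : ℝ := u μ k i / Real.sqrt (nsq μ k)

lemma ph_inner {μ : Fin N → ℝ} (hN : 0 < N) (hμ : ∀ i, 0 < μ i) (k l : Fin N) :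
    (∑ i, ph μ k i * ph μ l i) = if k = l then 1 else 0 := by
  have h1 : (∑ i, ph μ k i * ph μ l i)
      = (∑ i, u μ k i * u μ l i) / (Real.sqrt (nsq μ k) * Real.sqrt (nsq μ l)) := by
    rw [Finset.sum_div]
    exact Finset.sum_congr rfl fun i _ => by rw [ph, ph, div_mul_div_comm]
  rw [h1, uinner hN hμ]
  by_cases h : k = l
  · subst h
    rw [if_pos rfl, if_pos rfl, Real.mul_self_sqrt (nsq_pos hN hμ k).le,
      div_self (nsq_pos hN hμ k).ne']
  · simp [h]

def sig (m : Fin N) : Fin N :=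
  if h : (m : ℕ) = 0 then m else ⟨N - (m : ℕ), by have := m.isLt; omega⟩

lemma sig_val_eq {m : Fin N} (h : (m : ℕ) = 0) : sig m = m := by rw [sig, dif_pos h]

lemma sig_val_ne {m : Fin N} (h : (m : ℕ) ≠ 0) : (sig m : ℕ) = N - (m : ℕ) := by
  rw [sig, dif_neg h]

lemma sig_sig (m : Fin N) : sig (sig m) = m := by
  have hm := m.isLt
  by_cases h : (m : ℕ) = 0
  · rw [sig_val_eq h, sig_val_eq h]
  · have h2 : (sig m : ℕ) ≠ 0 := by rw [sig_val_ne h]; omega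
    ext
    rw [sig_val_ne h2, sig_val_ne h]
    omega

lemma sig_inj {k l : Fin N} (h : sig k = sig l) : k = l := by
  rw [← sig_sig k, h, sig_sig]

noncomputable def B (μ a : Fin N → ℝ) (i j : Fin N) : ℝ :=
  ∑ m, a (sig m) * ph μ m i * ph μ m j

lemma B_symm (μ a : Fin N → ℝ) (i j : Fin N) : B μ a i j = B μ a j i :=
  Finset.sum_congr rfl fun m _ => by ring

lemma B_eigen {μ : Fin N → ℝ} (hN : 0 < N) (hμ : ∀ i, 0 < μ i) (a : Fin N → ℝ)
    (m i : Fin N) : ∑ j, B μ a i j * ph μ m j = a (sig m) * ph μ m i := by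
  unfold B
  simp only [Finset.sum_mul]
  rw [Finset.sum_comm]
  have h : ∀ p : Fin N, (∑ j, a (sig p) * ph μ p i * ph μ p j * ph μ m j)
      = a (sig p) * ph μ p i * (if p = m then 1 else 0) := by
    intro p
    calc (∑ j, a (sig p) * ph μ p i * ph μ p j * ph μ m j)
        = a (sig p) * ph μ p i * ∑ j, ph μ p j * ph μ m j := by
          rw [Finset.mul_sum]
          exact Finset.sum_congr rfl fun j _ => by ring
      _ = a (sig p) * ph μ p i * (if p = m then 1 else 0) := by rw [ph_inner hN hμ]
  rw [Finset.sum_congr rfl fun p _ => h p]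
  simp [mul_ite, Finset.sum_ite_eq']

lemma w_eq {μ : Fin N → ℝ} (hN : 0 < N) (hμ : ∀ i, 0 < μ i) (j : Fin N) :
    w μ j = Real.sqrt (T μ N) * ph μ ⟨0, hN⟩ j := by
  have hs : (0:ℝ) < Real.sqrt (T μ N) := Real.sqrt_pos.2 (T_pos hN hμ hN)
  have h1 : u μ ⟨0, hN⟩ j = w μ j := by simp [u]
  have h2 : nsq μ (⟨0, hN⟩ : Fin N) = T μ N := by rw [nsq, if_pos rfl]
  rw [ph, h1, h2, mul_div_cancel₀ _ hs.ne']

lemma B_w {μ : Fin N → ℝ} (hN : 0 < N) (hμ : ∀ i, 0 < μ i) (a : Fin N → ℝ) (i : Fin N) :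
    ∑ j, B μ a i j * w μ j = a ⟨0, hN⟩ * w μ i := by
  have hs : sig (⟨0, hN⟩ : Fin N) = ⟨0, hN⟩ := sig_val_eq rfl
  calc (∑ j, B μ a i j * w μ j)
      = Real.sqrt (T μ N) * ∑ j, B μ a i j * ph μ ⟨0, hN⟩ j := by
        rw [Finset.mul_sum]
        exact Finset.sum_congr rfl fun j _ => by rw [w_eq hN hμ j]; ring
    _ = Real.sqrt (T μ N) * (a ⟨0, hN⟩ * ph μ ⟨0, hN⟩ i) := by
        rw [B_eigen hN hμ a ⟨0, hN⟩ i, hs]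
    _ = a ⟨0, hN⟩ * w μ i := by rw [w_eq hN hμ i]; ring

lemma tele {μ : Fin N → ℝ} (hN : 0 < N) (hμ : ∀ i, 0 < μ i) (p : ℕ) :
    ∀ q, p ≤ q → q ≤ N →
      (∑ m ∈ Finset.univ.filter (fun m : Fin N => p ≤ (m : ℕ) ∧ (m : ℕ) < q),
        (1 / T μ (m : ℕ) - 1 / T μ ((m : ℕ) + 1)))
      = 1 / T μ p - 1 / T μ q := by
  intro q hpq
  induction q, hpq using Nat.le_induction with
  | base =>
    intro _
    have h : Finset.univ.filter (fun m : Fin N => p ≤ (m : ℕ) ∧ (m : ℕ) < p) = ∅ := by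
      ext m
      simp only [Finset.mem_filter, Finset.mem_univ, true_and, Finset.notMem_empty, iff_false]
      omega
    rw [h]
    simp
  | succ q hq ih =>
    intro hqN
    have hqN' : q ≤ N := by omega
    have hflt : Finset.univ.filter (fun m : Fin N => p ≤ (m : ℕ) ∧ (m : ℕ) < q + 1)
        = insert (⟨q, by omega⟩ : Fin N)
            (Finset.univ.filter (fun m : Fin N => p ≤ (m : ℕ) ∧ (m : ℕ) < q)) := by
      ext m
      simp [Fin.ext_iff]
      omega
    rw [hflt, Finset.sum_insert (by simp), ih hqN']
    simp only [Fin.val_mk]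
    ring

lemma B_neg {μ : Fin N → ℝ} (hN : 0 < N) (hμ : ∀ i, 0 < μ i) {a : Fin N → ℝ}
    (hmono : Monotone a)
    (hstrict : ∀ k : Fin N, k ≠ ⟨0, hN⟩ → a ⟨0, hN⟩ < a k)
    {i j : Fin N} (hij : (i : ℕ) < (j : ℕ)) : B μ a i j < 0 := by
  have hj0 : (j : ℕ) ≠ 0 := by omega
  have hjN := j.isLt
  have hTN : 0 < T μ N := T_pos hN hμ hN
  have hTj : 0 < T μ (j : ℕ) := T_pos hN hμ (Nat.pos_of_ne_zero hj0)
  have hTj1 : 0 < T μ ((j : ℕ) + 1) := T_pos hN hμ (Nat.succ_pos _)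
  set g : Fin N → ℝ := fun m =>
    if (m : ℕ) = 0 then a ⟨0, hN⟩ / T μ N
    else if (j : ℕ) < (m : ℕ) then a (sig m) * (μ m / (T μ (m : ℕ) * T μ ((m : ℕ) + 1)))
    else if m = j then -(a (sig j) * (1 / T μ ((j : ℕ) + 1)))
    else 0 with hg
  -- Step A : pointwise factorization
  have stepA : ∀ m : Fin N, a (sig m) * ph μ m i * ph μ m j = w μ i * w μ j * g m := by
    intro m
    have phm : ph μ m i * ph μ m j = u μ m i * u μ m j / nsq μ m := by
      rw [ph, ph, div_mul_div_comm, Real.mul_self_sqrt (nsq_pos hN hμ m).le]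
    rw [mul_assoc, phm]
    by_cases hm0 : (m : ℕ) = 0
    · have hui : u μ m i = w μ i := by simp [u, hm0]
      have huj : u μ m j = w μ j := by simp [u, hm0]
      have hnsq : nsq μ m = T μ N := by rw [nsq, if_pos hm0]
      have hsm : sig m = ⟨0, hN⟩ := by rw [sig_val_eq hm0]; exact Fin.ext hm0
      have hgm : g m = a ⟨0, hN⟩ / T μ N := by rw [hg]; simp [hm0]
      rw [hui, huj, hnsq, hsm, hgm]
      ring
    · have hm1 : 0 < (m : ℕ) := Nat.pos_of_ne_zero hm0
      have hTm : 0 < T μ (m : ℕ) := T_pos hN hμ hm1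
      have hTm1 : 0 < T μ ((m : ℕ) + 1) := T_pos hN hμ (Nat.succ_pos _)
      have hnsq : nsq μ m = T μ (m : ℕ) * T μ ((m : ℕ) + 1) / μ m := by
        rw [nsq, if_neg hm0]
      rcases lt_trichotomy (j : ℕ) (m : ℕ) with hjm | hjm | hjm
      · have hui : u μ m i = w μ i := by
          simp [u, hm0, show (i : ℕ) < (m : ℕ) by omega]
        have huj : u μ m j = w μ j := by simp [u, hm0, hjm]
        have hgm : g m = a (sig m) * (μ m / (T μ (m : ℕ) * T μ ((m : ℕ) + 1))) := by
          rw [hg]; simp [hm0, hjm]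
        rw [hui, huj, hnsq, hgm]
        field_simp [hTm.ne', hTm1.ne', (hμ m).ne']
      · have hmj : m = j := Fin.ext hjm.symm
        subst hmj
        have hui : u μ m i = w μ i := by simp [u, hm0, hij]
        have huj : u μ m m = -(T μ (m : ℕ)) / w μ m := by
          simp [u, hm0, lt_irrefl]
        have hgm : g m = -(a (sig m) * (1 / T μ ((m : ℕ) + 1))) := by
          rw [hg]; simp [hm0]
        rw [hui, huj, hnsq, hgm, ← w_sq hμ m]
        have hwm := (w_pos hμ m).ne'
        field_simp [hwm, hTm.ne', hTm1.ne']
      · have huj : u μ m j = 0 := by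
          have h1 : ¬ (j : ℕ) < (m : ℕ) := by omega
          have h2 : j ≠ m := fun e => by rw [e] at hjm; omega
          simp [u, hm0, h1, h2]
        have hgm : g m = 0 := by
          have h1 : ¬ (j : ℕ) < (m : ℕ) := by omega
          have h2 : m ≠ j := fun e => by rw [e] at hjm; omega
          rw [hg]; simp [hm0, h1, h2]
        rw [huj, hgm]
        simp
  -- Step B : sum of g
  have stepB : (∑ m, g m) = a ⟨0, hN⟩ / T μ N
      + (∑ m ∈ Finset.univ.filter (fun m : Fin N => (j : ℕ) < (m : ℕ)),
          a (sig m) * (μ m / (T μ (m : ℕ) * T μ ((m : ℕ) + 1))))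
      - a (sig j) * (1 / T μ ((j : ℕ) + 1)) := by
    have hpt : ∀ m : Fin N, g m
        = (if m = ⟨0, hN⟩ then a ⟨0, hN⟩ / T μ N else 0)
          + (if (j : ℕ) < (m : ℕ) then
              a (sig m) * (μ m / (T μ (m : ℕ) * T μ ((m : ℕ) + 1))) else 0)
          + (if m = j then -(a (sig j) * (1 / T μ ((j : ℕ) + 1))) else 0) := by
      intro m
      rw [hg]
      by_cases hm0 : (m : ℕ) = 0
      · have hmz : m = ⟨0, hN⟩ := Fin.ext hm0
        subst hmz
        have h1 : ¬ (j : ℕ) < 0 := by omega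
        have h2 : (⟨0, hN⟩ : Fin N) ≠ j := fun e => by rw [← e] at hj0; exact hj0 rfl
        simp [h1, h2]
      · have hmz : m ≠ ⟨0, hN⟩ := fun e => hm0 (by rw [e])
        rcases lt_trichotomy (j : ℕ) (m : ℕ) with hjm | hjm | hjm
        · have h2 : m ≠ j := fun e => by rw [e] at hjm; omega
          simp [hmz, hm0, hjm, h2]
        · have hmj : m = j := Fin.ext hjm.symm
          subst hmj
          simp [hmz, hm0, lt_irrefl]
        · have h1 : ¬ (j : ℕ) < (m : ℕ) := by omega
          have h2 : m ≠ j := fun e => by rw [e] at hjm; omega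
          simp [hmz, hm0, h1, h2]
    rw [Finset.sum_congr rfl fun m _ => hpt m]
    rw [Finset.sum_add_distrib, Finset.sum_add_distrib, Finset.sum_ite_eq',
      Finset.sum_ite_eq', ← Finset.sum_filter]
    simp
    ring
  -- the bracket expression is negative
  have hsig_j : (sig j : ℕ) = N - (j : ℕ) := sig_val_ne hj0
  have hgt : a ⟨0, hN⟩ < a (sig j) := by
    apply hstrict
    intro e
    have := congrArg Fin.val e
    rw [hsig_j] at this
    simp at this
    omega
  have hbound : (∑ m ∈ Finset.univ.filter (fun m : Fin N => (j : ℕ) < (m : ℕ)),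
        a (sig m) * (μ m / (T μ (m : ℕ) * T μ ((m : ℕ) + 1))))
      ≤ a (sig j) * (1 / T μ ((j : ℕ) + 1) - 1 / T μ N) := by
    have h1 : ∀ m ∈ Finset.univ.filter (fun m : Fin N => (j : ℕ) < (m : ℕ)),
        a (sig m) * (μ m / (T μ (m : ℕ) * T μ ((m : ℕ) + 1)))
          ≤ a (sig j) * (1 / T μ (m : ℕ) - 1 / T μ ((m : ℕ) + 1)) := by
      intro m hm
      rw [Finset.mem_filter] at hm
      have hjm : (j : ℕ) < (m : ℕ) := hm.2
      have hm0 : (m : ℕ) ≠ 0 := by omega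
      have hTm : 0 < T μ (m : ℕ) := T_pos hN hμ (by omega)
      have hTm1 : 0 < T μ ((m : ℕ) + 1) := T_pos hN hμ (Nat.succ_pos _)
      have hTs := T_succ μ m
      have key : 1 / T μ (m : ℕ) - 1 / T μ ((m : ℕ) + 1)
          = μ m / (T μ (m : ℕ) * T μ ((m : ℕ) + 1)) := by
        rw [hTs]
        have h3 : T μ (m : ℕ) + μ m ≠ 0 := by rw [← hTs]; exact hTm1.ne'
        field_simp
        ring
      rw [key]
      apply mul_le_mul_of_nonneg_right
      · apply hmono
        rw [Fin.le_def, sig_val_ne hm0, hsig_j]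
        omega
      · have := (hμ m).le
        positivity
    calc (∑ m ∈ Finset.univ.filter (fun m : Fin N => (j : ℕ) < (m : ℕ)),
          a (sig m) * (μ m / (T μ (m : ℕ) * T μ ((m : ℕ) + 1))))
        ≤ ∑ m ∈ Finset.univ.filter (fun m : Fin N => (j : ℕ) < (m : ℕ)),
            a (sig j) * (1 / T μ (m : ℕ) - 1 / T μ ((m : ℕ) + 1)) :=
          Finset.sum_le_sum h1
      _ = a (sig j) * ∑ m ∈ Finset.univ.filter (fun m : Fin N => (j : ℕ) < (m : ℕ)),
            (1 / T μ (m : ℕ) - 1 / T μ ((m : ℕ) + 1)) := (Finset.mul_sum _ _ _).symm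
      _ = a (sig j) * (1 / T μ ((j : ℕ) + 1) - 1 / T μ N) := by
          have hfe : Finset.univ.filter (fun m : Fin N => (j : ℕ) < (m : ℕ))
              = Finset.univ.filter
                  (fun m : Fin N => (j : ℕ) + 1 ≤ (m : ℕ) ∧ (m : ℕ) < N) := by
            ext m
            simp
          rw [hfe, tele hN hμ ((j : ℕ) + 1) N (by omega) le_rfl]
  -- conclude
  have hBij : B μ a i j = w μ i * w μ j * (∑ m, g m) := by
    rw [B, Finset.sum_congr rfl fun m _ => stepA m, ← Finset.mul_sum]
  rw [hBij, stepB]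
  apply mul_neg_of_pos_of_neg (mul_pos (w_pos hμ i) (w_pos hμ j))
  calc a ⟨0, hN⟩ / T μ N
        + (∑ m ∈ Finset.univ.filter (fun m : Fin N => (j : ℕ) < (m : ℕ)),
            a (sig m) * (μ m / (T μ (m : ℕ) * T μ ((m : ℕ) + 1))))
        - a (sig j) * (1 / T μ ((j : ℕ) + 1))
      ≤ a ⟨0, hN⟩ / T μ N + a (sig j) * (1 / T μ ((j : ℕ) + 1) - 1 / T μ N)
        - a (sig j) * (1 / T μ ((j : ℕ) + 1)) := by linarith
    _ = (a ⟨0, hN⟩ - a (sig j)) / T μ N := by ring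
    _ < 0 := div_neg_of_neg_of_pos (by linarith) hTN

end Stmt0

open Stmt0

/-- prescribing the Dirichlet spectrum of the combinatorial Laplacian on
the graph `G_N` (complete graph on interior vertices `v_1, …, v_N`, with one boundary
vertex `u_i` attached to each `v_i`).  Functions vanish at the boundary vertices, so the
Dirichlet Laplacian acts on `ℝ^N` (values at interior vertices), with the weighted inner
product `⟨f,g⟩ = ∑ μ_i f(v_i) g(v_i)`.  Eigenvalues (with multiplicity) are encoded via a
`μ`-orthonormal eigenbasis. -/
theorem stmt_0 (N : ℕ) (hN : 0 < N) (μ : Fin N → ℝ) (hμ : ∀ i, 0 < μ i)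
    (a : Fin N → ℝ) (hmono : Monotone a) (ha0 : 0 < a ⟨0, hN⟩)
    (hstrict : ∀ k : Fin N, k ≠ ⟨0, hN⟩ → a ⟨0, hN⟩ < a k) :
    ∃ (θ : Fin N → Fin N → ℝ) (θb : Fin N → ℝ),
      (∀ i j, θ i j = θ j i) ∧ (∀ i j, i ≠ j → 0 < θ i j) ∧ (∀ i, 0 < θb i) ∧
      ∃ ψ : Fin N → Fin N → ℝ,
        (∀ k l, (∑ i, μ i * ψ k i * ψ l i) = if k = l then 1 else 0) ∧
        (∀ k i, (1 / μ i) * (∑ j ∈ Finset.univ.filter (fun j => j ≠ i),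
              θ i j * (ψ k i - ψ k j))
            + (θb i / μ i) * ψ k i = a k * ψ k i) := by
  refine ⟨fun i j => -(w μ i * w μ j) * B μ a i j, fun i => a ⟨0, hN⟩ * μ i,
    fun i j => by
      show -(w μ i * w μ j) * B μ a i j = -(w μ j * w μ i) * B μ a j i
      rw [B_symm μ a i j]; ring,
    ?_, fun i => mul_pos ha0 (hμ i),
    fun k i => ph μ (sig k) i / w μ i, ?_, ?_⟩
  · -- positivity of θ
    intro i j hij
    have hB : B μ a i j < 0 := by
      rcases lt_trichotomy (i : ℕ) (j : ℕ) with h | h | h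
      · exact B_neg hN hμ hmono hstrict h
      · exact absurd (Fin.ext h) hij
      · rw [B_symm]; exact B_neg hN hμ hmono hstrict h
    show 0 < -(w μ i * w μ j) * B μ a i j
    have h1 : -(w μ i * w μ j) * B μ a i j = (w μ i * w μ j) * (-(B μ a i j)) := by ring
    rw [h1]
    exact mul_pos (mul_pos (w_pos hμ i) (w_pos hμ j)) (neg_pos.2 hB)
  · -- orthonormality
    intro k l
    have h : ∀ i : Fin N, μ i * (ph μ (sig k) i / w μ i) * (ph μ (sig l) i / w μ i)
        = ph μ (sig k) i * ph μ (sig l) i := by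
      intro i
      rw [← w_sq hμ i]
      have := (w_pos hμ i).ne'
      field_simp
    rw [Finset.sum_congr rfl fun i _ => h i, ph_inner hN hμ]
    by_cases hkl : k = l
    · simp [hkl]
    · have : sig k ≠ sig l := fun e => hkl (by rw [← sig_sig k, e, sig_sig])
      simp [hkl, this]
  · -- eigen equation
    intro k i
    have hwi := (w_pos hμ i).ne'
    have hμi := (hμ i).ne'
    have hpt : ∀ j : Fin N,
        -(w μ i * w μ j) * B μ a i j
            * (ph μ (sig k) i / w μ i - ph μ (sig k) j / w μ j)
          = (-(w μ i * (ph μ (sig k) i / w μ i))) * (B μ a i j * w μ j)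
            + w μ i * (B μ a i j * ph μ (sig k) j) := by
      intro j
      have hwj := (w_pos hμ j).ne'
      field_simp
      ring
    have hsum : (∑ j ∈ Finset.univ.filter (fun j => j ≠ i),
          (-(w μ i * w μ j) * B μ a i j)
            * (ph μ (sig k) i / w μ i - ph μ (sig k) j / w μ j))
        = (∑ j : Fin N, (-(w μ i * w μ j) * B μ a i j)
            * (ph μ (sig k) i / w μ i - ph μ (sig k) j / w μ j)) := by
      rw [Finset.filter_ne', Finset.sum_erase]
      simp
    rw [hsum, Finset.sum_congr rfl fun j _ => hpt j, Finset.sum_add_distrib,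
      ← Finset.mul_sum, ← Finset.mul_sum, B_w hN hμ, B_eigen hN hμ, sig_sig]
    field_simp
    rw [show μ i = w μ i * w μ i from (w_sq hμ i).symm]
    ring
end

section
/- For fixed l > 0 and a ∈ ℝ, let f^ε_{a0}(x) = a·δ^ε·arcsin(tanh x) with δ^ε = −(arcsin(tanh a^ε))^{-1}, a^ε = arccosh(l/(πε)). Then lim_{ε→0} ∫_0^1 ∫_{−a^ε}^0 (f^ε_{a0}(x))² · πε cosh x dx dθ = l·a². -/
/-- `arcosh y = log (y + √(y² − 1))` for `y ≥ 1`. -/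
noncomputable def arcosh (y : ℝ) : ℝ := Real.log (y + Real.sqrt (y ^ 2 - 1))

/-- `a^ε = arccosh(l/(πε))`. -/
noncomputable def aeps (l ε : ℝ) : ℝ := arcosh (l / (Real.pi * ε))

/-- `δ^ε = −(arcsin(tanh a^ε))⁻¹`. -/
noncomputable def deps (l ε : ℝ) : ℝ := -(Real.arcsin (Real.tanh (aeps l ε)))⁻¹

open Real Filter Topology intervalIntegral

lemma tanh_le_one' (x : ℝ) : Real.tanh x ≤ 1 := by
  rw [Real.tanh_eq_sinh_div_cosh, div_le_one (Real.cosh_pos x)]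
  nlinarith [Real.cosh_sub_sinh x, Real.exp_pos (-x)]

lemma neg_one_le_tanh' (x : ℝ) : -1 ≤ Real.tanh x := by
  rw [Real.tanh_eq_sinh_div_cosh, le_div_iff₀ (Real.cosh_pos x)]
  nlinarith [Real.cosh_add_sinh x, Real.exp_pos x]

lemma tanh_nonneg' {x : ℝ} (hx : 0 ≤ x) : 0 ≤ Real.tanh x := by
  rw [Real.tanh_eq_sinh_div_cosh]
  exact div_nonneg (Real.sinh_nonneg_iff.2 hx) (Real.cosh_pos x).le

lemma err_bound {x : ℝ} (hx : 0 ≤ x) :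
    ‖((Real.pi/2)^2 - (Real.arcsin (Real.tanh x))^2) * Real.cosh x‖ ≤ 7 := by
  set g := Real.arcsin (Real.tanh x) with hgdef
  have hcoshpos := Real.cosh_pos x
  have hg0 : 0 ≤ g := Real.arcsin_nonneg.2 (tanh_nonneg' hx)
  have hgpi : g ≤ Real.pi/2 := Real.arcsin_le_pi_div_two _
  set θ := Real.arccos (Real.tanh x) with hθdef
  have hθeq : θ = Real.pi/2 - g := Real.arccos_eq_pi_div_two_sub_arcsin _
  have hθ0 : 0 ≤ θ := Real.arccos_nonneg _
  have hθpi : θ ≤ Real.pi/2 := Real.arccos_le_pi_div_two.2 (tanh_nonneg' hx)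
  have hmul : 2/Real.pi * θ ≤ Real.sin θ := Real.mul_le_sin hθ0 hθpi
  have hsin : Real.sin θ = 1 / Real.cosh x := by
    rw [hθdef, Real.sin_arccos]
    have h1 : 1 - Real.tanh x ^ 2 = (1 / Real.cosh x) ^ 2 := by
      rw [Real.tanh_eq_sinh_div_cosh]
      field_simp
      linarith [Real.cosh_sq x]
    rw [h1, Real.sqrt_sq (by positivity)]
  have hpi : 0 < Real.pi := Real.pi_pos
  have h5 : θ * Real.cosh x ≤ Real.pi/2 := by
    rw [hsin] at hmul
    have h5' := mul_le_mul_of_nonneg_right hmul hcoshpos.le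
    rw [one_div_mul_cancel hcoshpos.ne'] at h5'
    rw [show 2 / Real.pi * θ * Real.cosh x = 2 * (θ * Real.cosh x) / Real.pi by ring,
      div_le_one hpi] at h5'
    linarith
  have hgsq : g^2 ≤ (Real.pi/2)^2 := pow_le_pow_left₀ hg0 hgpi 2
  have herr0 : 0 ≤ ((Real.pi/2)^2 - g^2) * Real.cosh x :=
    mul_nonneg (by linarith) hcoshpos.le
  rw [Real.norm_eq_abs, abs_of_nonneg herr0]
  have heq : ((Real.pi/2)^2 - g^2) * Real.cosh x = (θ * Real.cosh x) * (Real.pi/2 + g) := by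
    rw [hθeq]; ring
  rw [heq]
  have h6 : (θ * Real.cosh x) * (Real.pi/2 + g) ≤ (Real.pi/2) * Real.pi :=
    mul_le_mul h5 (by linarith) (by linarith) (by linarith)
  nlinarith [Real.pi_lt_d2, hpi]

lemma cont_tanh : Continuous Real.tanh := by
  have : Real.tanh = fun x => Real.sinh x / Real.cosh x := by
    funext x; exact Real.tanh_eq_sinh_div_cosh x
  rw [this]
  exact Real.continuous_sinh.div Real.continuous_cosh fun x => (Real.cosh_pos x).ne'

lemma cont_integrand : Continuous (fun x : ℝ => (Real.arcsin (Real.tanh x))^2 * Real.cosh x) :=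
  ((Real.continuous_arcsin.comp cont_tanh).pow 2).mul Real.continuous_cosh

lemma one_sub_tanh (x : ℝ) : 1 - Real.tanh x = Real.exp (-x) / Real.cosh x := by
  rw [Real.tanh_eq_sinh_div_cosh]
  field_simp [(Real.cosh_pos x).ne']
  exact Real.cosh_sub_sinh x

lemma tendsto_tanh_atTop' : Tendsto Real.tanh atTop (𝓝 1) := by
  have h2 : Tendsto (fun x : ℝ => Real.exp (-x) / Real.cosh x) atTop (𝓝 0) := by
    apply squeeze_zero_norm (fun x => ?_) Real.tendsto_exp_neg_atTop_nhds_zero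
    rw [Real.norm_eq_abs, abs_of_nonneg (by positivity)]
    calc Real.exp (-x) / Real.cosh x ≤ Real.exp (-x) / 1 :=
          div_le_div_of_nonneg_left (Real.exp_pos _).le one_pos (Real.one_le_cosh x)
      _ = Real.exp (-x) := by rw [div_one]
  have h3 := (tendsto_const_nhds : Tendsto (fun _ : ℝ => (1:ℝ)) atTop (𝓝 1)).sub h2
  rw [sub_zero] at h3
  exact h3.congr fun x => by linarith [one_sub_tanh x]

lemma even_integral (A : ℝ) :
    (∫ x in (-A)..0, (Real.arcsin (Real.tanh x))^2 * Real.cosh x)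
      = ∫ x in (0:ℝ)..A, (Real.arcsin (Real.tanh x))^2 * Real.cosh x := by
  have h := intervalIntegral.integral_comp_neg (a := (0:ℝ)) (b := A)
      (fun x => (Real.arcsin (Real.tanh x))^2 * Real.cosh x)
  simp only [Real.tanh_neg, Real.arcsin_neg, Real.cosh_neg, neg_zero, neg_sq] at h
  exact h.symm

lemma integral_cosh' (A : ℝ) : (∫ x in (0:ℝ)..A, Real.cosh x) = Real.sinh A := by
  rw [intervalIntegral.integral_eq_sub_of_hasDerivAt (fun x _ => Real.hasDerivAt_sinh x)
    (Real.continuous_cosh.intervalIntegrable 0 A), Real.sinh_zero, sub_zero]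

lemma main_limit (l a : ℝ) (hl : 0 < l) :
    Tendsto (fun A : ℝ => a^2 * ((Real.arcsin (Real.tanh A))⁻¹)^2 *
        ((l / Real.cosh A) * ∫ x in (0:ℝ)..A, (Real.arcsin (Real.tanh x))^2 * Real.cosh x))
      atTop (𝓝 (l * a^2)) := by
  have hpi := Real.pi_pos
  have harc : Tendsto (fun A => Real.arcsin (Real.tanh A)) atTop (𝓝 (Real.pi/2)) := by
    have h := (Real.continuous_arcsin.tendsto 1).comp tendsto_tanh_atTop'
    rw [Real.arcsin_one] at h
    exact h
  have h1 : Tendsto (fun A => a^2 * ((Real.arcsin (Real.tanh A))⁻¹)^2) atTop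
      (𝓝 (a^2 * ((Real.pi/2)⁻¹)^2)) :=
    tendsto_const_nhds.mul ((harc.inv₀ (by positivity)).pow 2)
  -- identity for the integral
  have hId : ∀ A : ℝ, (∫ x in (0:ℝ)..A, (Real.arcsin (Real.tanh x))^2 * Real.cosh x)
      = (Real.pi/2)^2 * Real.sinh A
        - ∫ x in (0:ℝ)..A, ((Real.pi/2)^2 - (Real.arcsin (Real.tanh x))^2) * Real.cosh x := by
    intro A
    have e1 : (∫ x in (0:ℝ)..A, ((Real.pi/2)^2 - (Real.arcsin (Real.tanh x))^2) * Real.cosh x)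
        = (∫ x in (0:ℝ)..A, (Real.pi/2)^2 * Real.cosh x)
          - ∫ x in (0:ℝ)..A, (Real.arcsin (Real.tanh x))^2 * Real.cosh x := by
      rw [← intervalIntegral.integral_sub (f := fun x => (Real.pi/2)^2 * Real.cosh x)
        ((continuous_const.mul Real.continuous_cosh).intervalIntegrable 0 A)
        (cont_integrand.intervalIntegrable 0 A)]
      apply intervalIntegral.integral_congr
      intro x _; ring
    rw [e1, intervalIntegral.integral_const_mul, integral_cosh']
    ring
  -- error term tends to zero
  have hzero : Tendsto (fun A : ℝ => (l / Real.cosh A) *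
      ∫ x in (0:ℝ)..A, ((Real.pi/2)^2 - (Real.arcsin (Real.tanh x))^2) * Real.cosh x)
      atTop (𝓝 0) := by
    have hbnd : Tendsto (fun A : ℝ => 14 * l * (A * Real.exp (-A))) atTop (𝓝 0) := by
      have := (Real.tendsto_pow_mul_exp_neg_atTop_nhds_zero 1).const_mul (14 * l)
      rw [mul_zero] at this
      simpa using this
    apply squeeze_zero_norm' ?_ hbnd
    filter_upwards [eventually_ge_atTop (0:ℝ)] with A hA
    have hcoshpos := Real.cosh_pos A
    have hE : ‖∫ x in (0:ℝ)..A, ((Real.pi/2)^2 - (Real.arcsin (Real.tanh x))^2) * Real.cosh x‖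
        ≤ 7 * |A - 0| := by
      apply intervalIntegral.norm_integral_le_of_norm_le_const
      intro x hx
      rw [Set.uIoc_of_le hA] at hx
      exact err_bound hx.1.le
    rw [sub_zero, abs_of_nonneg hA] at hE
    have hcosh2 : Real.exp A / 2 ≤ Real.cosh A := by
      rw [Real.cosh_eq]; have := (Real.exp_pos (-A)).le; linarith
    have hinv : l / Real.cosh A ≤ 2 * l * Real.exp (-A) := by
      rw [div_le_iff₀ hcoshpos]
      have h1 : Real.exp (-A) * Real.exp A = 1 := by rw [← Real.exp_add]; simp
      have h2 := mul_le_mul_of_nonneg_left hcosh2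
        (show (0:ℝ) ≤ 2 * l * Real.exp (-A) by positivity)
      have h3 : 2 * l * Real.exp (-A) * (Real.exp A / 2) = l := by
        rw [show 2 * l * Real.exp (-A) * (Real.exp A / 2)
            = l * (Real.exp (-A) * Real.exp A) from by ring, h1, mul_one]
      linarith
    rw [norm_mul]
    calc ‖l / Real.cosh A‖ * ‖∫ x in (0:ℝ)..A, ((Real.pi/2)^2 - (Real.arcsin (Real.tanh x))^2) * Real.cosh x‖
        ≤ (2 * l * Real.exp (-A)) * (7 * A) := by
          apply mul_le_mul _ hE (norm_nonneg _)
            (by positivity)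
          rw [Real.norm_eq_abs, abs_of_nonneg (by positivity)]
          exact hinv
      _ = 14 * l * (A * Real.exp (-A)) := by ring
  -- the tanh part
  have htanh : Tendsto (fun A : ℝ => l * (Real.pi/2)^2 * Real.tanh A) atTop
      (𝓝 (l * (Real.pi/2)^2)) := by
    have := tendsto_tanh_atTop'.const_mul (l * (Real.pi/2)^2)
    rw [mul_one] at this
    exact this
  have h2 : Tendsto (fun A : ℝ => (l / Real.cosh A) *
      ∫ x in (0:ℝ)..A, (Real.arcsin (Real.tanh x))^2 * Real.cosh x) atTop
      (𝓝 (l * (Real.pi/2)^2)) := by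
    have hsum := htanh.sub hzero
    rw [sub_zero] at hsum
    apply hsum.congr
    intro A
    have hc := (Real.cosh_pos A).ne'
    rw [hId A, Real.tanh_eq_sinh_div_cosh]
    field_simp
  have hfin := h1.mul h2
  have hval : a^2 * ((Real.pi/2)⁻¹)^2 * (l * (Real.pi/2)^2) = l * a^2 := by
    field_simp
  rw [hval] at hfin
  exact hfin


lemma cosh_arcosh {y : ℝ} (hy : 1 ≤ y) : Real.cosh (_root_.arcosh y) = y := by
  have h1 : (0:ℝ) ≤ y ^ 2 - 1 := by nlinarith
  have hs : Real.sqrt (y ^ 2 - 1) ^ 2 = y ^ 2 - 1 := Real.sq_sqrt h1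
  have hsn : 0 ≤ Real.sqrt (y ^ 2 - 1) := Real.sqrt_nonneg _
  have hz : 0 < y + Real.sqrt (y ^ 2 - 1) := by nlinarith
  rw [_root_.arcosh, Real.cosh_eq, Real.exp_log hz, ← Real.log_inv, Real.exp_log (by positivity)]
  field_simp
  nlinarith

lemma tendsto_aeps (l : ℝ) (hl : 0 < l) :
    Tendsto (fun ε => aeps l ε) (𝓝[>] (0:ℝ)) atTop := by
  have hpi := Real.pi_pos
  have hy : Tendsto (fun ε : ℝ => l / (Real.pi * ε)) (𝓝[>] (0:ℝ)) atTop := by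
    have h1 : Tendsto (fun ε : ℝ => ε⁻¹) (𝓝[>] (0:ℝ)) atTop := tendsto_inv_nhdsGT_zero
    have h2 := h1.const_mul_atTop (show (0:ℝ) < l / Real.pi by positivity)
    apply h2.congr
    intro ε
    rw [div_eq_mul_inv, div_eq_mul_inv, mul_inv]
    ring
  apply tendsto_atTop_mono' _ ?_ (Real.tendsto_log_atTop.comp hy)
  filter_upwards [hy.eventually (eventually_ge_atTop (1:ℝ))] with ε hε
  simp only [Function.comp, aeps, _root_.arcosh]
  have : (0:ℝ) < l / (Real.pi * ε) := by linarith
  exact Real.log_le_log this (by nlinarith [Real.sqrt_nonneg ((l / (Real.pi * ε))^2 - 1)])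

/-- the `L²` mass of `f^ε_{a0}(x) = a·δ^ε·arcsin(tanh x)` on the half
hyperbolic cylinder `Z^ε = [−a^ε,0] × ℝ/ℤ` with volume element `πε cosh x dx dθ`
(the `θ`-integral over `[0,1]` contributes a factor `1`) tends to `l·a²` as `ε → 0⁺`. -/
theorem stmt_6 (l a : ℝ) (hl : 0 < l) :
    Filter.Tendsto
      (fun ε : ℝ => ∫ x in (-(aeps l ε))..0,
        (a * deps l ε * Real.arcsin (Real.tanh x)) ^ 2 * (Real.pi * ε * Real.cosh x))
      (nhdsWithin 0 (Set.Ioi 0)) (nhds (l * a ^ 2)) := by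
  have hpi := Real.pi_pos
  have hev : ∀ᶠ ε in 𝓝[>] (0:ℝ),
      (fun A : ℝ => a^2 * ((Real.arcsin (Real.tanh A))⁻¹)^2 *
        ((l / Real.cosh A) * ∫ x in (0:ℝ)..A, (Real.arcsin (Real.tanh x))^2 * Real.cosh x))
        (aeps l ε)
      = ∫ x in (-(aeps l ε))..0,
        (a * deps l ε * Real.arcsin (Real.tanh x)) ^ 2 * (Real.pi * ε * Real.cosh x) := by
    filter_upwards [Ioo_mem_nhdsGT_of_mem (Set.mem_Ico.2 ⟨le_refl 0, by positivity⟩ :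
      (0:ℝ) ∈ Set.Ico (0:ℝ) (l / Real.pi))] with ε hε
    obtain ⟨hε0, hεl⟩ := hε
    have hy : 1 ≤ l / (Real.pi * ε) := by
      rw [le_div_iff₀ (by positivity)]
      rw [lt_div_iff₀ hpi] at hεl
      nlinarith
    have hcosh : Real.cosh (aeps l ε) = l / (Real.pi * ε) := _root_.cosh_arcosh hy
    have hcoshpos := Real.cosh_pos (aeps l ε)
    have hpe : Real.pi * ε = l / Real.cosh (aeps l ε) := by
      rw [hcosh]
      field_simp
    have hfun : (fun x => (a * deps l ε * Real.arcsin (Real.tanh x))^2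
          * (Real.pi * ε * Real.cosh x))
        = fun x => (a^2 * (deps l ε)^2 * (Real.pi * ε))
          * ((Real.arcsin (Real.tanh x))^2 * Real.cosh x) := by
      funext x; ring
    rw [hfun, intervalIntegral.integral_const_mul, even_integral, hpe]
    simp only [deps]
    ring
  exact Filter.Tendsto.congr' hev ((main_limit l a hl).comp (tendsto_aeps l hl))
end
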